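/- arXiv:2308.09696 — 4 statements merged into one kernel-verified Lean document; each statement's English description precedes it below -/
import Mathlib

section
/- If the metric dimension of the inclusion ideal graph In(R) of a commutative ring R (which is not a field) is finite, then R has only finitely many nontrivial ideals. -/
open SimpleGraph Finset

variable {V : Type*}

/-- A set of vertices is resolving if distance vectors to it distinguish vertices. -/
def IsResolving (G : SimpleGraph V) (S : Set V) : Prop :=
  ∀ u v : V, (∀ w ∈ S, G.dist u w = G.dist v w) → u = v

/-- The metric dimension: the least size of a (finite) resolving set. -/
noncomputable def metricDim (G : SimpleGraph V) : ℕ :=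
  sInf {k | ∃ S : Finset V, S.card = k ∧ IsResolving G ↑S}

/-- Two vertices are mutually maximally distant. -/
def MMD (G : SimpleGraph V) (u v : V) : Prop :=
  u ≠ v ∧ (∀ w, G.Adj u w → G.dist v w ≤ G.dist u v) ∧
    (∀ w, G.Adj v w → G.dist u w ≤ G.dist u v)

/-- The strong resolving graph: edges between mutually maximally distant vertices. -/
def strongResolvingGraph (G : SimpleGraph V) : SimpleGraph V where
  Adj u v := MMD G u v
  symm := by
    refine ⟨?_⟩
    rintro u v ⟨hne, h1, h2⟩
    refine ⟨hne.symm, ?_, ?_⟩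
    · intro w hw
      rw [SimpleGraph.dist_comm (u := v) (v := u)]
      exact h2 w hw
    · intro w hw
      rw [SimpleGraph.dist_comm (u := v) (v := u)]
      exact h1 w hw
  loopless := ⟨fun v h => h.1 rfl⟩

/-- A set strongly resolving a graph. -/
def IsStrongResolving (G : SimpleGraph V) (S : Set V) : Prop :=
  ∀ u v : V, u ≠ v → ∃ w ∈ S,
    G.dist w u = G.dist w v + G.dist v u ∨ G.dist w v = G.dist w u + G.dist u v

/-- Strong metric dimension. -/
noncomputable def sdim (G : SimpleGraph V) : ℕ :=
  sInf {k | ∃ S : Finset V, S.card = k ∧ IsStrongResolving G ↑S}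

/-- An independent set of vertices. -/
def IsIndepFinset (G : SimpleGraph V) (S : Finset V) : Prop :=
  ∀ u ∈ S, ∀ v ∈ S, u ≠ v → ¬ G.Adj u v

/-- Independence number. -/
noncomputable def indepNum (G : SimpleGraph V) : ℕ :=
  sSup {k | ∃ S : Finset V, S.card = k ∧ IsIndepFinset G S}

/-- Vertices of the inclusion graph on `{1,...,n}`: nonempty proper subsets. -/
def SubVert (n : ℕ) := {A : Finset (Fin n) // A.Nonempty ∧ A ≠ Finset.univ}

/-- The inclusion graph on nonempty proper subsets of `{1,...,n}`. -/
def inclGraph (n : ℕ) : SimpleGraph (SubVert n) where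
  Adj A B := A.1 ⊂ B.1 ∨ B.1 ⊂ A.1
  symm := ⟨fun _ _ h => h.symm⟩
  loopless := ⟨fun A h => by
    rcases h with h | h <;> exact (ssubset_irrefl A.1) h⟩

/-- Complement of a vertex of the inclusion graph. -/
def complVert {n : ℕ} (A : SubVert n) : SubVert n :=
  ⟨A.1ᶜ,
    Finset.nonempty_iff_ne_empty.mpr fun h => A.2.2 (by simpa using h),
    fun h => (Finset.nonempty_iff_ne_empty.mp A.2.1) (by simpa using h)⟩

/-- Vertices of the inclusion ideal graph of a product of chain rings:
tuples in a product of chains, excluding bottom and top. -/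
def ChainVert {m : ℕ} (d : Fin m → ℕ) := {v : ∀ i, Fin (d i + 2) // v ≠ ⊥ ∧ v ≠ ⊤}

/-- The inclusion graph on a product of chains (minus bottom and top),
modelling the inclusion ideal graph of a product of principal ideal rings. -/
def chainGraph {m : ℕ} (d : Fin m → ℕ) : SimpleGraph (ChainVert d) where
  Adj I J := I.1 < J.1 ∨ J.1 < I.1
  symm := ⟨fun _ _ h => h.symm⟩
  loopless := ⟨fun I h => by rcases h with h | h <;> exact lt_irrefl _ h⟩

/-- Vertices of the inclusion ideal graph: nontrivial ideals of `R`. -/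
def IdealVert (R : Type*) [CommRing R] := {I : Ideal R // I ≠ ⊥ ∧ I ≠ ⊤}

/-- The inclusion ideal graph of a commutative ring. -/
def inclIdealGraph (R : Type*) [CommRing R] : SimpleGraph (IdealVert R) where
  Adj I J := I.1 < J.1 ∨ J.1 < I.1
  symm := ⟨fun _ _ h => h.symm⟩
  loopless := ⟨fun I h => by rcases h with h | h <;> exact lt_irrefl _ h⟩

section Aux

variable {R : Type*} [CommRing R]

/-- Every nontrivial ideal `K` of `R` with `A ⊓ B = ⊥`, `A ⊔ B = ⊤`, and `A`, `B`
minimal, equals `A` or `B`. -/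
private lemma aux_sup_decomp {A B K : Ideal R} (hjoin : A ⊔ B = ⊤) (hK : K ≠ ⊥) (hK' : K ≠ ⊤) :
    K = (K ⊓ A) ⊔ (K ⊓ B) := by
  refine le_antisymm ?_ (sup_le inf_le_left inf_le_left)
  intro x hx
  have h1 : (1 : R) ∈ A ⊔ B := by rw [hjoin]; trivial
  obtain ⟨a, ha, b, hb, hab⟩ := Submodule.mem_sup.mp h1
  rw [Submodule.mem_sup]
  refine ⟨x * a, ⟨Ideal.mul_mem_right a K hx, Ideal.mul_mem_left A x ha⟩,
    x * b, ⟨Ideal.mul_mem_right b K hx, Ideal.mul_mem_left B x hb⟩, ?_⟩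
  rw [← mul_add, hab, mul_one]

private lemma dist_le_three (hconn : (inclIdealGraph R).Connected) (I J : IdealVert R) :
    (inclIdealGraph R).dist I J ≤ 3 := by
  classical
  by_cases hIJ : I = J
  · subst hIJ; simp [SimpleGraph.dist_self]
  have hne : I.1 ≠ J.1 := fun h => hIJ (Subtype.ext h)
  by_cases hle : I.1 ≤ J.1
  · have hadj : (inclIdealGraph R).Adj I J := Or.inl (lt_of_le_of_ne hle hne)
    calc (inclIdealGraph R).dist I J ≤ _ := SimpleGraph.dist_le hadj.toWalk
    _ ≤ 3 := by simp
  by_cases hle' : J.1 ≤ I.1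
  · have hadj : (inclIdealGraph R).Adj I J := Or.inr (lt_of_le_of_ne hle' hne.symm)
    calc (inclIdealGraph R).dist I J ≤ _ := SimpleGraph.dist_le hadj.toWalk
    _ ≤ 3 := by simp
  by_cases hmeet : I.1 ⊓ J.1 = ⊥
  · by_cases hjoin : I.1 ⊔ J.1 = ⊤
    · -- hard case
      by_cases hImin : ∃ K : Ideal R, ⊥ < K ∧ K < I.1
      · obtain ⟨K, hK0, hKA⟩ := hImin
        have hKtop : K ≠ ⊤ := fun h => I.2.2 (top_le_iff.mp (h ▸ hKA.le))
        set Kv : IdealVert R := ⟨K, hK0.ne', hKtop⟩ with hKv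
        have hLtop : K ⊔ J.1 ≠ ⊤ := by
          intro h
          have := sup_inf_assoc_of_le (x := K) (J.1) hKA.le
          rw [h, top_inf_eq, inf_comm, hmeet, sup_bot_eq] at this
          exact hKA.ne this.symm
        have hLbot : K ⊔ J.1 ≠ ⊥ := fun h => J.2.1 (le_bot_iff.mp (le_sup_right.trans h.le))
        set Lv : IdealVert R := ⟨K ⊔ J.1, hLbot, hLtop⟩ with hLv
        have h1 : (inclIdealGraph R).Adj I Kv := Or.inr hKA
        have h2 : (inclIdealGraph R).Adj Kv Lv := by
          refine Or.inl (lt_of_le_of_ne le_sup_left ?_)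
          intro h
          exact hle' (le_trans (le_sup_right.trans_eq h.symm) hKA.le)
        have h3 : (inclIdealGraph R).Adj Lv J := by
          refine Or.inr (lt_of_le_of_ne le_sup_right ?_)
          intro h
          have hKJ : K ≤ J.1 := le_sup_left.trans_eq h.symm
          exact hK0.ne' (le_bot_iff.mp (hmeet ▸ le_inf hKA.le hKJ))
        exact le_trans (SimpleGraph.dist_le
          (SimpleGraph.Walk.cons h1 (SimpleGraph.Walk.cons h2 h3.toWalk)))
          (by simp [SimpleGraph.Adj.toWalk])
      by_cases hJmin : ∃ K : Ideal R, ⊥ < K ∧ K < J.1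
      · obtain ⟨K, hK0, hKB⟩ := hJmin
        have hKtop : K ≠ ⊤ := fun h => J.2.2 (top_le_iff.mp (h ▸ hKB.le))
        set Kv : IdealVert R := ⟨K, hK0.ne', hKtop⟩ with hKv
        have hLtop : K ⊔ I.1 ≠ ⊤ := by
          intro h
          have := sup_inf_assoc_of_le (x := K) (I.1) hKB.le
          rw [h, top_inf_eq, hmeet, sup_bot_eq] at this
          exact hKB.ne this.symm
        have hLbot : K ⊔ I.1 ≠ ⊥ := fun h => I.2.1 (le_bot_iff.mp (le_sup_right.trans h.le))
        set Lv : IdealVert R := ⟨K ⊔ I.1, hLbot, hLtop⟩ with hLv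
        have h1 : (inclIdealGraph R).Adj I Lv := by
          refine Or.inl (lt_of_le_of_ne le_sup_right ?_)
          intro h
          have hKI : K ≤ I.1 := le_sup_left.trans_eq h.symm
          exact hK0.ne' (le_bot_iff.mp (hmeet ▸ le_inf hKI hKB.le))
        have h2 : (inclIdealGraph R).Adj Lv Kv := by
          refine Or.inr (lt_of_le_of_ne le_sup_left ?_)
          intro h
          exact hle (le_trans (le_sup_right.trans_eq h.symm) hKB.le)
        have h3 : (inclIdealGraph R).Adj Kv J := Or.inl hKB
        exact le_trans (SimpleGraph.dist_le
          (SimpleGraph.Walk.cons h1 (SimpleGraph.Walk.cons h2 h3.toWalk)))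
          (by simp [SimpleGraph.Adj.toWalk])
      · -- contradiction with connectivity
        exfalso
        push_neg at hImin hJmin
        have hclaim : ∀ K : IdealVert R, K = I ∨ K = J := by
          intro K
          have hA : K.1 ⊓ I.1 = ⊥ ∨ K.1 ⊓ I.1 = I.1 := by
            rcases eq_or_ne (K.1 ⊓ I.1) ⊥ with h | h
            · exact Or.inl h
            · rcases eq_or_ne (K.1 ⊓ I.1) I.1 with h' | h'
              · exact Or.inr h'
              · exact absurd (lt_of_le_of_ne inf_le_right h') (hImin _ (h.bot_lt))
          have hB : K.1 ⊓ J.1 = ⊥ ∨ K.1 ⊓ J.1 = J.1 := by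
            rcases eq_or_ne (K.1 ⊓ J.1) ⊥ with h | h
            · exact Or.inl h
            · rcases eq_or_ne (K.1 ⊓ J.1) J.1 with h' | h'
              · exact Or.inr h'
              · exact absurd (lt_of_le_of_ne inf_le_right h') (hJmin _ (h.bot_lt))
          have hdec := aux_sup_decomp (A := I.1) (B := J.1) hjoin K.2.1 K.2.2
          rcases hA with hA | hA <;> rcases hB with hB | hB <;>
            rw [hA, hB] at hdec
          · exact absurd (by simpa using hdec) K.2.1
          · exact Or.inr (Subtype.ext (by simpa using hdec))
          · exact Or.inl (Subtype.ext (by simpa using hdec))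
          · rw [hjoin] at hdec; exact absurd hdec K.2.2
        obtain ⟨w⟩ := hconn.preconnected I J
        cases w with
        | nil => exact hIJ rfl
        | cons h p =>
          rename_i W
          rcases hclaim W with rfl | rfl
          · exact (inclIdealGraph R).loopless.irrefl _ h
          · rcases h with h | h
            · exact hle h.le
            · exact hle' h.le
    · -- join proper: path through sup
      have hLbot : I.1 ⊔ J.1 ≠ ⊥ := fun h => I.2.1 (le_bot_iff.mp (le_sup_left.trans h.le))
      set Lv : IdealVert R := ⟨I.1 ⊔ J.1, hLbot, hjoin⟩ with hLv
      have h1 : (inclIdealGraph R).Adj I Lv :=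
        Or.inl (lt_of_le_of_ne le_sup_left (fun h => hle' (le_sup_right.trans_eq h.symm)))
      have h2 : (inclIdealGraph R).Adj Lv J :=
        Or.inr (lt_of_le_of_ne le_sup_right (fun h => hle (le_sup_left.trans_eq h.symm)))
      exact le_trans (SimpleGraph.dist_le (SimpleGraph.Walk.cons h1 h2.toWalk))
        (by simp [SimpleGraph.Adj.toWalk])
  · -- meet nontrivial: path through inf
    have hMtop : I.1 ⊓ J.1 ≠ ⊤ := fun h => I.2.2 (top_le_iff.mp (h.symm.trans_le inf_le_left))
    set Mv : IdealVert R := ⟨I.1 ⊓ J.1, hmeet, hMtop⟩ with hMv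
    have h1 : (inclIdealGraph R).Adj I Mv :=
      Or.inr (lt_of_le_of_ne inf_le_left (fun h => hle (inf_le_right.trans_eq' (show I.1 ⊓ J.1 = I.1 from h))))
    have h2 : (inclIdealGraph R).Adj Mv J :=
      Or.inl (lt_of_le_of_ne inf_le_right (fun h => hle' (inf_le_left.trans_eq' (show I.1 ⊓ J.1 = J.1 from h))))
    exact le_trans (SimpleGraph.dist_le (SimpleGraph.Walk.cons h1 h2.toWalk))
      (by simp [SimpleGraph.Adj.toWalk])

end Aux

/-- If the metric dimension of `In(R)` is finite (i.e. there is a finite resolving set),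
then `R` has only finitely many nontrivial ideals. -/
theorem stmt0 (R : Type*) [CommRing R] (hfield : ¬ IsField R)
    (hconn : (inclIdealGraph R).Connected)
    (hfin : ∃ S : Finset (IdealVert R), IsResolving (inclIdealGraph R) ↑S) :
    {I : Ideal R | I ≠ ⊥ ∧ I ≠ ⊤}.Finite := by
  obtain ⟨S, hS⟩ := hfin
  have hd := dist_le_three (R := R) hconn
  have hinj : Function.Injective
      (fun v : IdealVert R => fun w : ↥S => (⟨(inclIdealGraph R).dist v w.1,
        Nat.lt_succ_of_le (hd v w.1)⟩ : Fin 4)) := by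
    intro u v h
    apply hS u v
    intro w hw
    simpa using congrArg Fin.val (congrFun h ⟨w, hw⟩)
  haveI hV : Finite (IdealVert R) := Finite.of_injective _ hinj
  exact (Set.finite_coe_iff (s := {I : Ideal R | I ≠ ⊥ ∧ I ≠ ⊤})).mp hV
end

section
/- The inclusion graph on nonempty proper subsets of a 4-element set has metric dimension 3; in particular the set of three singletons {1}, {2}, {3} is a metric basis. -/
open SimpleGraph Finset

variable {V : Type*}

namespace InclAux4

abbrev V4 := SubVert 4
abbrev G4 := inclGraph 4

instance : DecidablePred (fun A : Finset (Fin 4) => A.Nonempty ∧ A ≠ Finset.univ) :=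
  fun _ => inferInstanceAs (Decidable (_ ∧ _))
instance : Fintype V4 := Subtype.fintype _
instance : DecidableEq V4 := Subtype.instDecidableEq
instance : DecidableRel G4.Adj := fun A B => inferInstanceAs (Decidable (A.1 ⊂ B.1 ∨ B.1 ⊂ A.1))

/-- Explicit distance function on the inclusion graph for `n = 4`. -/
def dfun (A B : V4) : ℕ :=
  if A = B then 0
  else if A.1 ⊆ B.1 ∨ B.1 ⊆ A.1 then 1
  else if B.1 = A.1ᶜ then 3 else 2

set_option maxRecDepth 40000 in
lemma exists_common_nbr : ∀ A B : V4, ¬(A.1 ⊆ B.1 ∨ B.1 ⊆ A.1) → B.1 ≠ A.1ᶜ →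
    ∃ C, G4.Adj A C ∧ G4.Adj C B := by decide

set_option maxRecDepth 40000 in
lemma exists_walk3 : ∀ A B : V4, B.1 = A.1ᶜ →
    ∃ C D, G4.Adj A C ∧ G4.Adj C D ∧ G4.Adj D B := by decide

set_option maxRecDepth 40000 in
lemma no_common_nbr : ∀ A B C : V4, B.1 = A.1ᶜ → ¬(G4.Adj A C ∧ G4.Adj C B) := by decide

set_option maxRecDepth 40000 in
lemma compl_not_adj : ∀ A B : V4, B.1 = A.1ᶜ → ¬ G4.Adj A B := by decide

set_option maxRecDepth 40000 in
lemma compl_ne : ∀ A B : V4, B.1 = A.1ᶜ → A ≠ B := by decide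

lemma adj_of_comparable {A B : V4} (h : A ≠ B) (hc : A.1 ⊆ B.1 ∨ B.1 ⊆ A.1) :
    G4.Adj A B := by
  have hne : A.1 ≠ B.1 := fun he => h (Subtype.ext he)
  rcases hc with hc | hc
  · exact Or.inl (ssubset_of_ne_of_subset hne hc)
  · exact Or.inr (ssubset_of_ne_of_subset hne.symm hc)

lemma not_adj_of_incomparable {A B : V4} (hc : ¬(A.1 ⊆ B.1 ∨ B.1 ⊆ A.1)) :
    ¬ G4.Adj A B := by
  rintro (h | h)
  · exact hc (Or.inl h.subset)
  · exact hc (Or.inr h.subset)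

/-- The distance in the inclusion graph on a 4-set equals `dfun`. -/
lemma dist_eq (A B : V4) : G4.dist A B = dfun A B := by
  unfold dfun
  split_ifs with h1 h2 h3
  · subst h1; exact SimpleGraph.dist_self
  · exact SimpleGraph.dist_eq_one_iff_adj.mpr (adj_of_comparable h1 h2)
  · -- complement pair: distance 3
    obtain ⟨C, D, a1, a2, a3⟩ := exists_walk3 A B h3
    have hle : G4.dist A B ≤ 3 := by
      simpa using SimpleGraph.dist_le (SimpleGraph.Walk.cons a1 (.cons a2 (.cons a3 .nil)))
    have hreach : G4.Reachable A B := ⟨.cons a1 (.cons a2 (.cons a3 .nil))⟩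
    have h0 : G4.dist A B ≠ 0 := by
      rw [ne_eq, hreach.dist_eq_zero_iff]; exact compl_ne A B h3
    have hA1 : G4.dist A B ≠ 1 := by
      rw [ne_eq, SimpleGraph.dist_eq_one_iff_adj]; exact compl_not_adj A B h3
    have hA2 : G4.dist A B ≠ 2 := by
      intro hd
      obtain ⟨p, hp⟩ := hreach.exists_walk_length_eq_dist
      rw [hd] at hp
      cases p with
      | nil => simp at hp
      | cons a q =>
        cases q with
        | nil => simp at hp
        | cons b r =>
          cases r with
          | nil => exact no_common_nbr A B _ h3 ⟨a, b⟩
          | cons c s => simp [SimpleGraph.Walk.length_cons] at hp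
    omega
  · -- incomparable, not complement: distance 2
    obtain ⟨C, a1, a2⟩ := exists_common_nbr A B h2 h3
    have hle : G4.dist A B ≤ 2 := by
      simpa using SimpleGraph.dist_le (SimpleGraph.Walk.cons a1 (.cons a2 .nil))
    have hreach : G4.Reachable A B := ⟨.cons a1 (.cons a2 .nil)⟩
    have h0 : G4.dist A B ≠ 0 := by rw [ne_eq, hreach.dist_eq_zero_iff]; exact h1
    have hA1 : G4.dist A B ≠ 1 := by
      rw [ne_eq, SimpleGraph.dist_eq_one_iff_adj]; exact not_adj_of_incomparable h2
    omega

def s0 : V4 := ⟨{0}, by decide⟩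
def s1 : V4 := ⟨{1}, by decide⟩
def s2 : V4 := ⟨{2}, by decide⟩

set_option maxRecDepth 40000 in
lemma key1 : ∀ u v : V4, dfun u s0 = dfun v s0 → dfun u s1 = dfun v s1 →
    dfun u s2 = dfun v s2 → u = v := by decide

set_option maxRecDepth 100000 in
lemma key2 : ∀ w1 w2 : V4, ∃ u v : V4, u ≠ v ∧
    dfun u w1 = dfun v w1 ∧ dfun u w2 = dfun v w2 := by decide

lemma resolving_singletons :
    IsResolving (inclGraph 4) {A : SubVert 4 | A.1 = {0} ∨ A.1 = {1} ∨ A.1 = {2}} := by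
  intro u v h
  have hm0 : s0 ∈ {A : SubVert 4 | A.1 = {0} ∨ A.1 = {1} ∨ A.1 = {2}} := Or.inl rfl
  have hm1 : s1 ∈ {A : SubVert 4 | A.1 = {0} ∨ A.1 = {1} ∨ A.1 = {2}} := Or.inr (Or.inl rfl)
  have hm2 : s2 ∈ {A : SubVert 4 | A.1 = {0} ∨ A.1 = {1} ∨ A.1 = {2}} := Or.inr (Or.inr rfl)
  refine key1 u v ?_ ?_ ?_
  · rw [← dist_eq, ← dist_eq]; exact h s0 hm0
  · rw [← dist_eq, ← dist_eq]; exact h s1 hm1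
  · rw [← dist_eq, ← dist_eq]; exact h s2 hm2

end InclAux4

theorem stmt4 :
    metricDim (inclGraph 4) = 3 ∧
      IsResolving (inclGraph 4)
        {A : SubVert 4 | A.1 = {0} ∨ A.1 = {1} ∨ A.1 = {2}} := by
  open InclAux4 in
  refine ⟨?_, resolving_singletons⟩
  have h3mem : 3 ∈ {k | ∃ S : Finset (SubVert 4), S.card = k ∧ IsResolving (inclGraph 4) ↑S} := by
    refine ⟨{s0, s1, s2}, by decide, ?_⟩
    intro u v h
    refine key1 u v ?_ ?_ ?_
    · rw [← dist_eq, ← dist_eq]; exact h s0 (by simp)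
    · rw [← dist_eq, ← dist_eq]; exact h s1 (by simp)
    · rw [← dist_eq, ← dist_eq]; exact h s2 (by simp)
  refine le_antisymm (Nat.sInf_le h3mem) (le_csInf ⟨3, h3mem⟩ ?_)
  rintro k ⟨S, rfl, hres⟩
  by_contra hk
  push_neg at hk
  -- S has at most 2 elements; find w1 w2 covering S
  have cover : ∃ w1 w2 : SubVert 4, ∀ w ∈ S, w = w1 ∨ w = w2 := by
    rcases S.eq_empty_or_nonempty with rfl | ⟨a, ha⟩
    · exact ⟨s0, s0, by simp⟩
    · rcases (S.erase a).eq_empty_or_nonempty with he | ⟨b, hb⟩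
      · refine ⟨a, a, fun w hw => Or.inl ?_⟩
        by_contra hwa
        have : w ∈ S.erase a := Finset.mem_erase.mpr ⟨hwa, hw⟩
        simp [he] at this
      · have hbS : b ∈ S := Finset.mem_of_mem_erase hb
        have hba : b ≠ a := Finset.ne_of_mem_erase hb
        refine ⟨a, b, fun w hw => ?_⟩
        by_contra hcon
        push_neg at hcon
        obtain ⟨hwa, hwb⟩ := hcon
        have hsub : ({w, a, b} : Finset (SubVert 4)) ⊆ S := by
          intro z hz
          simp only [Finset.mem_insert, Finset.mem_singleton] at hz
          rcases hz with rfl | rfl | rfl <;> assumption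
        have hcard : ({w, a, b} : Finset (SubVert 4)).card = 3 := by
          rw [Finset.card_insert_of_notMem (by simp [hwa, hwb]),
            Finset.card_insert_of_notMem (by simp [hba.symm]), Finset.card_singleton]
        have := Finset.card_le_card hsub
        omega
  obtain ⟨w1, w2, hcov⟩ := cover
  obtain ⟨u, v, huv, h1, h2⟩ := key2 w1 w2
  refine huv (hres u v ?_)
  intro w hw
  rcases hcov w hw with rfl | rfl
  · rw [dist_eq, dist_eq]; exact h1
  · rw [dist_eq, dist_eq]; exact h2
end

section
/- For n ≥ 5, the set of all n singletons {1}, ..., {n} is a resolving set of the inclusion graph on nonempty proper subsets of {1,...,n}; hence its metric dimension is at most n. -/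
open SimpleGraph Finset

variable {V : Type*}

private def singVert {n : ℕ} (hn : 5 ≤ n) (i : Fin n) : SubVert n :=
  ⟨{i}, Finset.singleton_nonempty i, by
    intro h
    have hc := congrArg Finset.card h
    rw [Finset.card_singleton, Finset.card_univ, Fintype.card_fin] at hc
    omega⟩

private lemma singVert_reach {n : ℕ} (hn : 5 ≤ n) (i : Fin n) (A : SubVert n) :
    (inclGraph n).Reachable A (singVert hn i) := by
  obtain ⟨j, hj⟩ := A.2.1
  by_cases hi : i ∈ A.1
  · rcases eq_or_ne A.1 ({i} : Finset (Fin n)) with h | h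
    · exact (Subtype.ext h : A = singVert hn i) ▸ SimpleGraph.Reachable.refl A
    · exact SimpleGraph.Adj.reachable (Or.inr
        ((Finset.singleton_subset_iff.mpr hi).ssubset_of_ne (Ne.symm h)))
  · have hji : j ≠ i := fun e => hi (e ▸ hj)
    by_cases hU : insert i A.1 = Finset.univ
    · -- A = univ \ {i}; go A ~ {j} ~ {i,j} ~ {i}
      have hcard : A.1.card = n - 1 := by
        have := congrArg Finset.card hU
        rw [Finset.card_insert_of_notMem hi, Finset.card_univ, Fintype.card_fin] at this
        omega
      have hAj : ({j} : Finset (Fin n)) ⊂ A.1 := by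
        refine (Finset.singleton_subset_iff.mpr hj).ssubset_of_ne ?_
        intro e
        have := congrArg Finset.card e
        rw [Finset.card_singleton, hcard] at this
        omega
      set P : SubVert n := ⟨{i, j}, ⟨i, by simp⟩, by
        intro h
        have hc := congrArg Finset.card h
        rw [Finset.card_univ, Fintype.card_fin] at hc
        have : ({i, j} : Finset (Fin n)).card ≤ 2 := Finset.card_insert_le _ _ |>.trans (by simp)
        omega⟩ with hP
      have r1 : (inclGraph n).Adj A (singVert hn j) := Or.inr hAj
      have r2 : (inclGraph n).Adj (singVert hn j) P := by
        refine Or.inl ((Finset.singleton_subset_iff.mpr (by simp [hP])).ssubset_of_ne ?_)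
        intro e
        have hij : i = j := by
          have : i ∈ ({j} : Finset (Fin n)) := e ▸ (by simp : i ∈ ({i, j} : Finset (Fin n)))
          simpa using this
        exact hji hij.symm
      have r3 : (inclGraph n).Adj P (singVert hn i) := by
        refine Or.inr ((Finset.singleton_subset_iff.mpr (by simp [hP])).ssubset_of_ne ?_)
        intro e
        have : j ∈ ({i} : Finset (Fin n)) := e.symm ▸ (by simp : j ∈ ({i, j} : Finset (Fin n)))
        exact hji (by simpa using this)
      exact (r1.reachable.trans r2.reachable).trans r3.reachable
    · set B : SubVert n := ⟨insert i A.1, ⟨i, Finset.mem_insert_self i _⟩, hU⟩ with hB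
      have r1 : (inclGraph n).Adj A B :=
        Or.inl (Finset.ssubset_insert hi)
      have r2 : (inclGraph n).Adj (singVert hn i) B := by
        refine Or.inl ((Finset.singleton_subset_iff.mpr (Finset.mem_insert_self i _)).ssubset_of_ne ?_)
        intro e
        have : j ∈ ({i} : Finset (Fin n)) := e ▸ Finset.mem_insert_of_mem hj
        exact hji (by simpa using this)
      exact r1.reachable.trans r2.reachable.symm

private lemma key {n : ℕ} (hn : 5 ≤ n) {A B : SubVert n} (i : Fin n)
    (hiA : i ∈ A.1) (hiB : i ∉ B.1)
    (h : (inclGraph n).dist A (singVert hn i) = (inclGraph n).dist B (singVert hn i)) :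
    False := by
  have h1 : (inclGraph n).dist A (singVert hn i) ≤ 1 := by
    rcases eq_or_ne A.1 ({i} : Finset (Fin n)) with e | e
    · rw [show A = singVert hn i from Subtype.ext e, SimpleGraph.dist_self]
      omega
    · rw [SimpleGraph.dist_eq_one_iff_adj.mpr
        (Or.inr ((Finset.singleton_subset_iff.mpr hiA).ssubset_of_ne (Ne.symm e)))]
  have hBne : B ≠ singVert hn i := by
    intro e
    exact hiB (by rw [e]; simp [singVert])
  have hpos : 0 < (inclGraph n).dist B (singVert hn i) :=
    (singVert_reach hn i B).pos_dist_of_ne hBne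
  have hne1 : (inclGraph n).dist B (singVert hn i) ≠ 1 := by
    intro e
    rcases SimpleGraph.dist_eq_one_iff_adj.mp e with hadj | hadj
    · have hsub : B.1 ⊆ {i} := hadj.subset
      obtain ⟨k, hk⟩ := B.2.1
      have : k = i := by simpa using hsub hk
      exact hiB (this ▸ hk)
    · exact hiB (hadj.subset (by simp [singVert]))
  omega

theorem stmt5 (n : ℕ) (hn : 5 ≤ n) :
    IsResolving (inclGraph n) {A : SubVert n | ∃ i : Fin n, A.1 = {i}} ∧
      metricDim (inclGraph n) ≤ n := by
  have hres : IsResolving (inclGraph n) {A : SubVert n | ∃ i : Fin n, A.1 = {i}} := by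
    intro A B h
    by_contra hne
    have hne1 : A.1 ≠ B.1 := fun e => hne (Subtype.ext e)
    by_cases hAB : A.1 ⊆ B.1
    · have : ¬ B.1 ⊆ A.1 := fun h2 => hne1 (Finset.Subset.antisymm hAB h2)
      obtain ⟨i, hiB, hiA⟩ := Finset.not_subset.mp this
      exact key hn i hiB hiA (h (singVert hn i) ⟨i, rfl⟩).symm
    · obtain ⟨i, hiA, hiB⟩ := Finset.not_subset.mp hAB
      exact key hn i hiA hiB (h (singVert hn i) ⟨i, rfl⟩)
  refine ⟨hres, ?_⟩
  have hinj : Function.Injective (singVert hn) := by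
    intro i j e
    have : ({i} : Finset (Fin n)) = {j} := congrArg Subtype.val e
    simpa using this
  haveI : DecidableEq (SubVert n) := Classical.decEq _
  set S : Finset (SubVert n) := Finset.univ.image (singVert hn) with hS
  have hScard : S.card = n := by
    rw [hS, Finset.card_image_of_injective _ hinj, Finset.card_univ, Fintype.card_fin]
  have hScoe : (↑S : Set (SubVert n)) = {A : SubVert n | ∃ i : Fin n, A.1 = {i}} := by
    ext A
    simp only [hS, Finset.coe_image, Finset.coe_univ, Set.image_univ, Set.mem_range,
      Set.mem_setOf_eq]
    constructor
    · rintro ⟨i, rfl⟩; exact ⟨i, rfl⟩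
    · rintro ⟨i, hi⟩; exact ⟨i, Subtype.ext hi.symm⟩
  exact Nat.sInf_le ⟨S, hScard, hScoe ▸ hres⟩
end

section
/- For n ≥ 3 and distinct nonempty proper subsets A, B of {1,...,n}, the vertices A and B are mutually maximally distant in the inclusion graph G_n if and only if B = A^c, or (A, B are incomparable under inclusion and A, B^c are incomparable under inclusion). -/
open SimpleGraph Finset

variable {V : Type*}

section Stmt9Aux

variable {n : ℕ}

lemma compl_vert_val (A : SubVert n) : (complVert A).1 = A.1ᶜ := rfl

lemma compl_compl_vert (A : SubVert n) : complVert (complVert A) = A :=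
  Subtype.ext (by simp [compl_vert_val])

lemma not_adj_compl (A : SubVert n) : ¬ (inclGraph n).Adj A (complVert A) := by
  rintro (h | h)
  · obtain ⟨x, hx⟩ := A.2.1
    exact Finset.mem_compl.mp (h.subset hx) hx
  · obtain ⟨x, hx⟩ := (complVert A).2.1
    exact Finset.mem_compl.mp hx (h.subset hx)

lemma no_common (A C : SubVert n) (h1 : (inclGraph n).Adj A C)
    (h2 : (inclGraph n).Adj C (complVert A)) : False := by
  obtain ⟨x, hx⟩ := A.2.1
  obtain ⟨y, hy⟩ := (complVert A).2.1
  have hy' : y ∉ A.1 := Finset.mem_compl.mp hy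
  rcases h1 with h1 | h1 <;> rcases h2 with h2 | h2
  · exact Finset.mem_compl.mp (h2.subset (h1.subset hx)) hx
  · apply C.2.2
    apply Finset.eq_univ_of_forall
    intro z
    by_cases hz : z ∈ A.1
    · exact h1.subset hz
    · exact h2.subset (Finset.mem_compl.mpr hz)
  · obtain ⟨c, hc⟩ := C.2.1
    exact Finset.mem_compl.mp (h2.subset hc) (h1.subset hc)
  · exact hy' (h1.subset (h2.subset hy))

lemma three_le_length (A : SubVert n) :
    ∀ {B : SubVert n} (p : (inclGraph n).Walk A B), B = complVert A → 3 ≤ p.length := by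
  intro B p hB
  cases p with
  | nil =>
    exfalso
    obtain ⟨x, hx⟩ := A.2.1
    have hx' : x ∈ A.1ᶜ := by rw [← compl_vert_val, ← hB]; exact hx
    exact Finset.mem_compl.mp hx' hx
  | cons h q =>
    rename_i C
    cases q with
    | nil => rw [hB] at h; exact absurd h (not_adj_compl A)
    | cons h' r =>
      rename_i D
      cases r with
      | nil => rw [hB] at h'; exact (no_common A C h h').elim
      | cons h'' s => simp [SimpleGraph.Walk.length_cons]

lemma exists_walk3_aux (A : SubVert n) (h2 : 2 ≤ A.1ᶜ.card) :
    ∃ p : (inclGraph n).Walk A (complVert A), p.length = 3 := by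
  obtain ⟨y, hy, z, hz, hyz⟩ := Finset.one_lt_card.mp h2
  obtain ⟨x, hx⟩ := A.2.1
  have hyA : y ∉ A.1 := Finset.mem_compl.mp hy
  have hzA : z ∉ A.1 := Finset.mem_compl.mp hz
  have hxy : x ≠ y := fun h => hyA (h ▸ hx)
  have hCuniv : A.1 ∪ {y} ≠ Finset.univ := by
    intro h
    have : z ∈ A.1 ∪ {y} := by rw [h]; exact Finset.mem_univ z
    rcases Finset.mem_union.mp this with h' | h'
    · exact hzA h'
    · exact hyz (Finset.mem_singleton.mp h').symm
  have hDuniv : ({y} : Finset (Fin n)) ≠ Finset.univ := by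
    intro h
    exact hxy (Finset.mem_singleton.mp (h ▸ Finset.mem_univ x))
  set C : SubVert n := ⟨A.1 ∪ {y}, ⟨x, Finset.mem_union_left _ hx⟩, hCuniv⟩ with hC
  set D : SubVert n := ⟨{y}, ⟨y, Finset.mem_singleton_self y⟩, hDuniv⟩ with hD
  have a1 : (inclGraph n).Adj A C := by
    left
    refine Finset.ssubset_def.mpr ⟨Finset.subset_union_left, fun h => hyA (h ?_)⟩
    exact Finset.mem_union_right _ (Finset.mem_singleton_self y)
  have a2 : (inclGraph n).Adj C D := by
    right
    refine Finset.ssubset_def.mpr ⟨?_, fun h => ?_⟩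
    · intro w hw
      exact Finset.mem_union_right _ hw
    · have : x ∈ ({y} : Finset (Fin n)) := h (Finset.mem_union_left _ hx)
      exact hxy (Finset.mem_singleton.mp this)
  have a3 : (inclGraph n).Adj D (complVert A) := by
    left
    refine Finset.ssubset_def.mpr ⟨Finset.singleton_subset_iff.mpr hy, fun h => ?_⟩
    exact hyz (Finset.mem_singleton.mp (h hz)).symm
  exact ⟨.cons a1 (.cons a2 (.cons a3 .nil)), by simp⟩

lemma exists_walk3 (hn : 3 ≤ n) (A : SubVert n) :
    ∃ p : (inclGraph n).Walk A (complVert A), p.length = 3 := by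
  by_cases h2 : 2 ≤ A.1ᶜ.card
  · exact exists_walk3_aux A h2
  · have hcard : A.1.card + A.1ᶜ.card = n := by
      rw [Finset.card_add_card_compl]; simp
    have h2' : 2 ≤ (complVert A).1ᶜ.card := by
      rw [compl_vert_val, compl_compl]
      omega
    obtain ⟨p, hp⟩ := exists_walk3_aux (complVert A) h2'
    exact ⟨(p.copy rfl (compl_compl_vert A)).reverse, by simp [hp]⟩

lemma dist_compl_ge (hn : 3 ≤ n) (A : SubVert n) :
    3 ≤ (inclGraph n).dist A (complVert A) := by
  obtain ⟨p0, _⟩ := exists_walk3 hn A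
  have hr : (inclGraph n).Reachable A (complVert A) := ⟨p0⟩
  obtain ⟨p, hp⟩ := hr.exists_walk_length_eq_dist
  have := three_le_length A p rfl
  omega

lemma dist_compl_le (hn : 3 ≤ n) (A : SubVert n) :
    (inclGraph n).dist A (complVert A) ≤ 3 := by
  obtain ⟨p, hp⟩ := exists_walk3 hn A
  have := SimpleGraph.dist_le p
  omega

lemma common_neighbor (A B : SubVert n) (h1 : ¬A.1 ⊆ B.1) (h2 : ¬B.1 ⊆ A.1)
    (h3 : B.1 ≠ A.1ᶜ) :
    ∃ C : SubVert n, (inclGraph n).Adj A C ∧ (inclGraph n).Adj C B := by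
  by_cases hi : (A.1 ∩ B.1).Nonempty
  · have huniv : A.1 ∩ B.1 ≠ Finset.univ := by
      intro h
      have : Finset.univ ⊆ A.1 := by
        intro x hx
        rw [← h] at hx
        exact (Finset.mem_inter.mp hx).1
      exact A.2.2 (Finset.univ_subset_iff.mp this)
    refine ⟨⟨A.1 ∩ B.1, hi, huniv⟩, Or.inr ?_, Or.inl ?_⟩
    · exact Finset.ssubset_def.mpr ⟨Finset.inter_subset_left,
        fun h => h1 fun x hx => (Finset.mem_inter.mp (h hx)).2⟩
    · exact Finset.ssubset_def.mpr ⟨Finset.inter_subset_right,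
        fun h => h2 fun x hx => (Finset.mem_inter.mp (h hx)).1⟩
  · have hdisj : ∀ x, x ∈ A.1 → x ∉ B.1 := by
      intro x hxA hxB
      exact hi ⟨x, Finset.mem_inter.mpr ⟨hxA, hxB⟩⟩
    have huniv : A.1 ∪ B.1 ≠ Finset.univ := by
      intro h
      apply h3
      ext x
      simp only [Finset.mem_compl]
      constructor
      · intro hxB hxA; exact hdisj x hxA hxB
      · intro hxA
        have hx : x ∈ A.1 ∪ B.1 := by rw [h]; exact Finset.mem_univ x
        rcases Finset.mem_union.mp hx with h' | h'
        · exact absurd h' hxA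
        · exact h'
    obtain ⟨a, ha⟩ := A.2.1
    refine ⟨⟨A.1 ∪ B.1, ⟨a, Finset.mem_union_left _ ha⟩, huniv⟩, Or.inl ?_, Or.inr ?_⟩
    · exact Finset.ssubset_def.mpr ⟨Finset.subset_union_left,
        fun h => h2 fun x hx => h (Finset.mem_union_right _ hx)⟩
    · exact Finset.ssubset_def.mpr ⟨Finset.subset_union_right,
        fun h => h1 fun x hx => h (Finset.mem_union_left _ hx)⟩

lemma not_adj_of_incomp (A B : SubVert n) (h1 : ¬A.1 ⊆ B.1) (h2 : ¬B.1 ⊆ A.1) :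
    ¬ (inclGraph n).Adj A B := by
  rintro (h | h)
  · exact h1 h.subset
  · exact h2 h.subset

lemma dist_le_two (A B : SubVert n) (h3 : B.1 ≠ A.1ᶜ) :
    (inclGraph n).dist A B ≤ 2 := by
  by_cases he : A = B
  · simp [he, SimpleGraph.dist_self]
  by_cases hab : A.1 ⊆ B.1
  · have hadj : (inclGraph n).Adj A B :=
      Or.inl (Finset.ssubset_iff_subset_ne.mpr ⟨hab, fun h => he (Subtype.ext h)⟩)
    rw [SimpleGraph.dist_eq_one_iff_adj.mpr hadj]; omega
  by_cases hba : B.1 ⊆ A.1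
  · have hadj : (inclGraph n).Adj A B :=
      Or.inr (Finset.ssubset_iff_subset_ne.mpr ⟨hba, fun h => he (Subtype.ext h.symm)⟩)
    rw [SimpleGraph.dist_eq_one_iff_adj.mpr hadj]; omega
  obtain ⟨C, hc1, hc2⟩ := common_neighbor A B hab hba h3
  have := SimpleGraph.dist_le (SimpleGraph.Walk.cons hc1 (SimpleGraph.Walk.cons hc2 .nil))
  simpa using this

lemma dist_eq_two (A B : SubVert n) (h1 : ¬A.1 ⊆ B.1) (h2 : ¬B.1 ⊆ A.1)
    (h3 : B.1 ≠ A.1ᶜ) : (inclGraph n).dist A B = 2 := by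
  obtain ⟨C, hc1, hc2⟩ := common_neighbor A B h1 h2 h3
  have hle := dist_le_two A B h3
  have hne : A ≠ B := fun h => h1 (h ▸ subset_rfl)
  have hreach : (inclGraph n).Reachable A B := hc1.reachable.trans hc2.reachable
  have h0 : (inclGraph n).dist A B ≠ 0 :=
    SimpleGraph.dist_ne_zero_iff_ne_and_reachable.mpr ⟨hne, hreach⟩
  have h1' : (inclGraph n).dist A B ≠ 1 := fun h =>
    not_adj_of_incomp A B h1 h2 (SimpleGraph.dist_eq_one_iff_adj.mp h)
  omega

lemma dist_le_three_s9 (hn : 3 ≤ n) (A B : SubVert n) :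
    (inclGraph n).dist A B ≤ 3 := by
  by_cases h3 : B.1 = A.1ᶜ
  · have : B = complVert A := Subtype.ext h3
    rw [this]; exact dist_compl_le hn A
  · exact (dist_le_two A B h3).trans (by omega)

end Stmt9Aux

theorem stmt9 (n : ℕ) (hn : 3 ≤ n) (A B : SubVert n) (hAB : A ≠ B) :
    MMD (inclGraph n) A B ↔
      B = complVert A ∨
        ((¬ A.1 ⊆ B.1 ∧ ¬ B.1 ⊆ A.1) ∧ (¬ A.1 ⊆ B.1ᶜ ∧ ¬ B.1ᶜ ⊆ A.1)) := by
  constructor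
  · rintro ⟨hne, h1, h2⟩
    by_cases hc : B = complVert A
    · exact Or.inl hc
    right
    have hcv : B.1 ≠ A.1ᶜ := fun h => hc (Subtype.ext h)
    have hab : ¬ A.1 ⊆ B.1 := by
      intro hab
      obtain ⟨y, hy⟩ := (complVert B).2.1
      have hyB : y ∉ B.1 := Finset.mem_compl.mp hy
      have hss : A.1 ⊂ B.1 :=
        Finset.ssubset_iff_subset_ne.mpr ⟨hab, fun h => hAB (Subtype.ext h)⟩
      obtain ⟨b, hbB, hbA⟩ := Finset.exists_of_ssubset hss
      obtain ⟨a, haA⟩ := A.2.1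
      have hbW : b ∉ A.1 ∪ {y} := by
        intro h
        rcases Finset.mem_union.mp h with h' | h'
        · exact hbA h'
        · exact hyB ((Finset.mem_singleton.mp h') ▸ hbB)
      have hWuniv : A.1 ∪ {y} ≠ Finset.univ := fun h =>
        hbW (by rw [h]; exact Finset.mem_univ b)
      set W : SubVert n := ⟨A.1 ∪ {y}, ⟨a, Finset.mem_union_left _ haA⟩, hWuniv⟩ with hWdef
      have hAW : (inclGraph n).Adj A W := by
        left
        refine Finset.ssubset_def.mpr ⟨Finset.subset_union_left, fun h => ?_⟩
        exact hyB (hab (h (Finset.mem_union_right _ (Finset.mem_singleton_self y))))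
      have hd2 : (inclGraph n).dist B W = 2 := by
        apply dist_eq_two
        · intro h; exact hbW (h hbB)
        · intro h
          exact hyB (h (Finset.mem_union_right _ (Finset.mem_singleton_self y)))
        · intro h
          have : a ∈ B.1ᶜ := by rw [← h]; exact Finset.mem_union_left _ haA
          exact Finset.mem_compl.mp this (hab haA)
      have hb := h1 W hAW
      rw [hd2, SimpleGraph.dist_eq_one_iff_adj.mpr (Or.inl hss)] at hb
      omega
    have hba : ¬ B.1 ⊆ A.1 := by
      intro hba
      obtain ⟨y, hy⟩ := (complVert A).2.1
      have hyA : y ∉ A.1 := Finset.mem_compl.mp hy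
      have hss : B.1 ⊂ A.1 :=
        Finset.ssubset_iff_subset_ne.mpr ⟨hba, fun h => hAB (Subtype.ext h.symm)⟩
      obtain ⟨b, hbA, hbB⟩ := Finset.exists_of_ssubset hss
      obtain ⟨c, hcB⟩ := B.2.1
      have hbW : b ∉ B.1 ∪ {y} := by
        intro h
        rcases Finset.mem_union.mp h with h' | h'
        · exact hbB h'
        · exact hyA ((Finset.mem_singleton.mp h') ▸ hbA)
      have hWuniv : B.1 ∪ {y} ≠ Finset.univ := fun h =>
        hbW (by rw [h]; exact Finset.mem_univ b)
      set W : SubVert n := ⟨B.1 ∪ {y}, ⟨c, Finset.mem_union_left _ hcB⟩, hWuniv⟩ with hWdef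
      have hBW : (inclGraph n).Adj B W := by
        left
        refine Finset.ssubset_def.mpr ⟨Finset.subset_union_left, fun h => ?_⟩
        exact hyA (hba (h (Finset.mem_union_right _ (Finset.mem_singleton_self y))))
      have hd2 : (inclGraph n).dist A W = 2 := by
        apply dist_eq_two
        · intro h; exact hbW (h hbA)
        · intro h
          exact hyA (h (Finset.mem_union_right _ (Finset.mem_singleton_self y)))
        · intro h
          have : c ∈ A.1ᶜ := by rw [← h]; exact Finset.mem_union_left _ hcB
          exact Finset.mem_compl.mp this (hba hcB)
      have hb := h2 W hBW
      rw [hd2, SimpleGraph.dist_eq_one_iff_adj.mpr (Or.inr hss)] at hb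
      omega
    refine ⟨⟨hab, hba⟩, ?_⟩
    have hdAB : (inclGraph n).dist A B = 2 := dist_eq_two A B hab hba hcv
    have hkey : ¬ (inclGraph n).Adj A (complVert B) := by
      intro hadj
      have hb := h1 (complVert B) hadj
      rw [hdAB] at hb
      have h3' := dist_compl_ge hn B
      omega
    constructor
    · intro h
      have hne' : A.1 ≠ B.1ᶜ := by
        intro heq
        apply hcv
        rw [heq, compl_compl]
      exact hkey (Or.inl (Finset.ssubset_iff_subset_ne.mpr ⟨h, hne'⟩))
    · intro h
      have hne' : B.1ᶜ ≠ A.1 := by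
        intro heq
        apply hcv
        rw [← heq, compl_compl]
      exact hkey (Or.inr (Finset.ssubset_iff_subset_ne.mpr ⟨h, hne'⟩))
  · rintro (h | ⟨⟨hab, hba⟩, habc, hbca⟩)
    · subst h
      refine ⟨hAB, ?_, ?_⟩
      · intro W _
        exact (dist_le_three_s9 hn _ _).trans (dist_compl_ge hn A)
      · intro W _
        exact (dist_le_three_s9 hn _ _).trans (dist_compl_ge hn A)
    · have hcv : B.1 ≠ A.1ᶜ := by
        intro h
        apply habc
        rw [h, compl_compl]
      have hd : (inclGraph n).dist A B = 2 := dist_eq_two A B hab hba hcv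
      refine ⟨hAB, ?_, ?_⟩
      · intro W hW
        rw [hd]
        apply dist_le_two
        intro h
        rcases hW with hW | hW
        · exact habc (by rw [← h]; exact hW.subset)
        · exact hbca (by rw [← h]; exact hW.subset)
      · intro W hW
        rw [hd]
        apply dist_le_two
        intro h
        rcases hW with hW | hW
        · apply habc
          intro x hx
          have hBW : B.1 ⊆ A.1ᶜ := by rw [← h]; exact hW.subset
          exact Finset.mem_compl.mpr fun hxB => Finset.mem_compl.mp (hBW hxB) hx
        · apply hbca
          intro x hx
          have hWB : A.1ᶜ ⊆ B.1 := by rw [← h]; exact hW.subset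
          by_contra hxA
          exact Finset.mem_compl.mp hx (hWB (Finset.mem_compl.mpr hxA))
end
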